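/- Let E be a real inner product space, let N be a nonempty finite set of clients with |N| = N, and let M ⊆ N be a nonempty subset with |M| = M such that M divides N; assign each selected client the weight γ = N/M. For each client n ∈ N let F_n : E → ℝ be differentiable with L-Lipschitz gradient and ‖∇F_n(x)‖ ≤ G for all x ∈ E. Fix η > 0 and H ≥ 1, and for each n define local iterates y_n^0 ∈ E and y_n^{j+1} = y_n^j − η·∇F_n(y_n^j) for 0 ≤ j < H, and the accumulated update G_n = Σ_{j=0}^{H−1} ∇F_n(y_n^j). For each n ∈ M let G̃_n ∈ E be a compressed update with compression error β_n = ‖G̃_n − G_n‖, and define the approximation error α = ‖(1/N)·Σ_{n∈M} γ·∇F_n(y_n^0) − (1/N)·Σ_{n∈N} ∇F_n(y_n^0)‖. Then ‖(η/M)·Σ_{n∈M} G̃_n − (η/N)·Σ_{n∈N} G_n‖ ≤ L·G·H²·η² + α·H·η + (η/M)·Σ_{n∈M} β_n. -/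

import Mathlib

/-- Lemma 1 (deterministic form): the aggregated compressed update of the selected
subset deviates from the ideal full aggregation by at most
`L·G·H²·η² + α·H·η + (η/M)·∑_{n∈M} β_n`. -/
theorem lemma1_aggregation_deviation
    {E : Type*} [NormedAddCommGroup E] [InnerProductSpace ℝ E] [CompleteSpace E]
    {ι : Type*} [Fintype ι] [Nonempty ι]
    (N Mnum : ℕ) (hN : Fintype.card ι = N)
    (M : Finset ι) (hM : M.Nonempty) (hMcard : M.card = Mnum)
    (hdvd : Mnum ∣ N) (γ : ℕ) (hγ : γ = N / Mnum)
    (F : ι → E → ℝ) (hF : ∀ n, Differentiable ℝ (F n))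
    (L : ℝ) (hL : 0 ≤ L)
    (hLip : ∀ n, ∀ x y : E, ‖gradient (F n) x - gradient (F n) y‖ ≤ L * ‖x - y‖)
    (G : ℝ) (hG : 0 ≤ G)
    (hGbound : ∀ n, ∀ x : E, ‖gradient (F n) x‖ ≤ G)
    (η : ℝ) (hη : 0 < η) (H : ℕ) (hH : 1 ≤ H)
    (y : ι → ℕ → E)
    (hrec : ∀ n, ∀ j < H, y n (j + 1) = y n j - η • gradient (F n) (y n j))
    (Gn : ι → E) (hGn : ∀ n, Gn n = ∑ j ∈ Finset.range H, gradient (F n) (y n j))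
    (Gtilde : ι → E) (β : ι → ℝ) (hβ : ∀ n, β n = ‖Gtilde n - Gn n‖)
    (α : ℝ)
    (hα : α = ‖(1 / (N : ℝ)) • ∑ n ∈ M, (γ : ℝ) • gradient (F n) (y n 0) -
              (1 / (N : ℝ)) • ∑ n, gradient (F n) (y n 0)‖) :
    ‖(η / (Mnum : ℝ)) • ∑ n ∈ M, Gtilde n - (η / (N : ℝ)) • ∑ n, Gn n‖ ≤
      L * G * (H : ℝ) ^ 2 * η ^ 2 + α * (H : ℝ) * η +
        (η / (Mnum : ℝ)) * ∑ n ∈ M, β n := by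
  set g : ι → ℕ → E := fun n j => gradient (F n) (y n j) with hg
  have hNpos : 0 < N := by
    rw [← hN]; exact Fintype.card_pos
  have hMpos : 0 < Mnum := by
    rw [← hMcard]; exact Finset.card_pos.mpr hM
  have hNR : (0:ℝ) < (N:ℝ) := by exact_mod_cast hNpos
  have hMR : (0:ℝ) < (Mnum:ℝ)  := by exact_mod_cast hMpos
  have hγM : (γ:ℝ) * (Mnum:ℝ) = (N:ℝ) := by
    have : γ * Mnum = N := by rw [hγ]; exact Nat.div_mul_cancel hdvd
    exact_mod_cast this
  -- drift bound
  have hdrift : ∀ n, ∀ j, j ≤ H → ‖y n j - y n 0‖ ≤ (j:ℝ) * (η * G) := by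
    intro n j
    induction j with
    | zero => intro _; simp
    | succ j ih =>
      intro hj
      have hjH : j < H := hj
      have ihj := ih (Nat.le_of_lt hjH)
      rw [hrec n j hjH]
      have heq : y n j - η • g n j - y n 0 = (y n j - y n 0) - η • g n j := by abel
      calc ‖y n j - η • g n j - y n 0‖ = ‖(y n j - y n 0) - η • g n j‖ := by rw [heq]
        _ ≤ ‖y n j - y n 0‖ + ‖η • g n j‖ := norm_sub_le _ _
        _ ≤ (j:ℝ) * (η * G) + η * G := by
            refine add_le_add ihj ?_
            rw [norm_smul, Real.norm_eq_abs, abs_of_pos hη]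
            exact mul_le_mul_of_nonneg_left (hGbound n _) hη.le
        _ = ((j+1:ℕ):ℝ) * (η * G) := by push_cast; ring
  have hgrad : ∀ n, ∀ j < H, ‖g n j - g n 0‖ ≤ (j:ℝ) * (L * (η * G)) := by
    intro n j hj
    calc ‖g n j - g n 0‖ ≤ L * ‖y n j - y n 0‖ := hLip n _ _
      _ ≤ L * ((j:ℝ) * (η * G)) := mul_le_mul_of_nonneg_left (hdrift n j hj.le) hL
      _ = (j:ℝ) * (L * (η * G)) := by ring
  -- the per-step aggregation terms
  set T : ℕ → E := fun j => (η / (Mnum:ℝ)) • ∑ n ∈ M, g n j - (η / (N:ℝ)) • ∑ n, g n j with hT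
  -- norm of the alignment term equals η * α
  have hηα : ‖(η / (Mnum:ℝ)) • ∑ n ∈ M, g n 0 - (η / (N:ℝ)) • ∑ n, g n 0‖ = η * α := by
    have h1 : (1 / (N:ℝ)) • ∑ n ∈ M, (γ:ℝ) • g n 0 = (1 / (Mnum:ℝ)) • ∑ n ∈ M, g n 0 := by
      rw [Finset.smul_sum, Finset.smul_sum]
      refine Finset.sum_congr rfl fun n _ => ?_
      rw [smul_smul]
      congr 1
      field_simp
      linarith [hγM]
    have h2 : (η / (Mnum:ℝ)) • ∑ n ∈ M, g n 0 - (η / (N:ℝ)) • ∑ n, g n 0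
        = η • ((1 / (Mnum:ℝ)) • ∑ n ∈ M, g n 0 - (1 / (N:ℝ)) • ∑ n, g n 0) := by
      rw [smul_sub, smul_smul, smul_smul]
      ring_nf
    rw [h2, norm_smul, Real.norm_eq_abs, abs_of_pos hη, hα, h1]
  have hTbound : ∀ j < H, ‖T j‖ ≤ 2 * ((j:ℝ) * (L * (η * G))) * η + η * α := by
    intro j hj
    have hdecomp : T j = (η / (Mnum:ℝ)) • ∑ n ∈ M, (g n j - g n 0)
        - (η / (N:ℝ)) • ∑ n, (g n j - g n 0)
        + ((η / (Mnum:ℝ)) • ∑ n ∈ M, g n 0 - (η / (N:ℝ)) • ∑ n, g n 0) := by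
      simp only [hT, Finset.sum_sub_distrib, smul_sub]
      abel
    have hb1 : ‖(η / (Mnum:ℝ)) • ∑ n ∈ M, (g n j - g n 0)‖ ≤ (j:ℝ) * (L * (η * G)) * η := by
      rw [norm_smul, Real.norm_eq_abs, abs_of_pos (by positivity)]
      calc (η / (Mnum:ℝ)) * ‖∑ n ∈ M, (g n j - g n 0)‖
          ≤ (η / (Mnum:ℝ)) * ((Mnum:ℝ) * ((j:ℝ) * (L * (η * G)))) := by
            refine mul_le_mul_of_nonneg_left ?_ (by positivity)
            calc ‖∑ n ∈ M, (g n j - g n 0)‖ ≤ ∑ n ∈ M, ‖g n j - g n 0‖ :=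
                  norm_sum_le _ _
              _ ≤ ∑ _n ∈ M, (j:ℝ) * (L * (η * G)) :=
                  Finset.sum_le_sum fun n _ => hgrad n j hj
              _ = (Mnum:ℝ) * ((j:ℝ) * (L * (η * G))) := by
                  rw [Finset.sum_const, hMcard, nsmul_eq_mul]
        _ = (j:ℝ) * (L * (η * G)) * η := by field_simp
    have hb2 : ‖(η / (N:ℝ)) • ∑ n, (g n j - g n 0)‖ ≤ (j:ℝ) * (L * (η * G)) * η := by
      rw [norm_smul, Real.norm_eq_abs, abs_of_pos (by positivity)]
      calc (η / (N:ℝ)) * ‖∑ n, (g n j - g n 0)‖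
          ≤ (η / (N:ℝ)) * ((N:ℝ) * ((j:ℝ) * (L * (η * G)))) := by
            refine mul_le_mul_of_nonneg_left ?_ (by positivity)
            calc ‖∑ n, (g n j - g n 0)‖ ≤ ∑ n, ‖g n j - g n 0‖ := norm_sum_le _ _
              _ ≤ ∑ _n : ι, (j:ℝ) * (L * (η * G)) :=
                  Finset.sum_le_sum fun n _ => hgrad n j hj
              _ = (N:ℝ) * ((j:ℝ) * (L * (η * G))) := by
                  rw [Finset.sum_const, Finset.card_univ, hN, nsmul_eq_mul]
        _ = (j:ℝ) * (L * (η * G)) * η := by field_simp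
    calc ‖T j‖
        ≤ ‖(η / (Mnum:ℝ)) • ∑ n ∈ M, (g n j - g n 0)‖
            + ‖(η / (N:ℝ)) • ∑ n, (g n j - g n 0)‖
            + ‖(η / (Mnum:ℝ)) • ∑ n ∈ M, g n 0 - (η / (N:ℝ)) • ∑ n, g n 0‖ := by
          rw [hdecomp]
          exact (norm_add_le _ _).trans (add_le_add_left (norm_sub_le _ _) _)
      _ ≤ (j:ℝ) * (L * (η * G)) * η + (j:ℝ) * (L * (η * G)) * η + η * α := by
          rw [hηα]; exact add_le_add (add_le_add hb1 hb2) le_rfl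
      _ = 2 * ((j:ℝ) * (L * (η * G))) * η + η * α := by ring
  -- main decomposition
  have hkey : (η / (Mnum : ℝ)) • ∑ n ∈ M, Gtilde n - (η / (N : ℝ)) • ∑ n, Gn n
      = (η / (Mnum:ℝ)) • ∑ n ∈ M, (Gtilde n - Gn n) + ∑ j ∈ Finset.range H, T j := by
    have hMsum : ∑ n ∈ M, Gn n = ∑ j ∈ Finset.range H, ∑ n ∈ M, g n j := by
      simp only [hGn]; exact Finset.sum_comm
    have hUsum : ∑ n, Gn n = ∑ j ∈ Finset.range H, ∑ n, g n j := by
      simp only [hGn]; exact Finset.sum_comm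
    simp only [hT, Finset.sum_sub_distrib, ← Finset.smul_sum, ← hMsum, ← hUsum,
      Finset.sum_sub_distrib, smul_sub]
    abel
  have hβsum : ‖(η / (Mnum:ℝ)) • ∑ n ∈ M, (Gtilde n - Gn n)‖
      ≤ (η / (Mnum : ℝ)) * ∑ n ∈ M, β n := by
    rw [norm_smul, Real.norm_eq_abs, abs_of_pos (by positivity)]
    refine mul_le_mul_of_nonneg_left ?_ (by positivity)
    calc ‖∑ n ∈ M, (Gtilde n - Gn n)‖ ≤ ∑ n ∈ M, ‖Gtilde n - Gn n‖ := norm_sum_le _ _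
      _ = ∑ n ∈ M, β n := by simp [hβ]
  have hTsum : ‖∑ j ∈ Finset.range H, T j‖
      ≤ L * G * (H : ℝ) ^ 2 * η ^ 2 + α * (H : ℝ) * η := by
    have hgauss0 : ∀ m : ℕ, ∑ j ∈ Finset.range m, (j:ℝ) = (m:ℝ) * ((m:ℝ) - 1) / 2 := by
      intro m
      induction m with
      | zero => simp
      | succ k ih => rw [Finset.sum_range_succ, ih]; push_cast; ring
    have hgauss := hgauss0 H
    calc ‖∑ j ∈ Finset.range H, T j‖ ≤ ∑ j ∈ Finset.range H, ‖T j‖ := norm_sum_le _ _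
      _ ≤ ∑ j ∈ Finset.range H, (2 * ((j:ℝ) * (L * (η * G))) * η + η * α) :=
          Finset.sum_le_sum fun j hj => hTbound j (Finset.mem_range.mp hj)
      _ = 2 * L * η ^ 2 * G * (∑ j ∈ Finset.range H, (j:ℝ)) + (H:ℝ) * (η * α) := by
          have hc : ∀ j ∈ Finset.range H,
              2 * ((j:ℝ) * (L * (η * G))) * η + η * α
                = (2 * L * η ^ 2 * G) * (j:ℝ) + η * α := fun j _ => by ring
          rw [Finset.sum_congr rfl hc, Finset.sum_add_distrib, ← Finset.mul_sum,
            Finset.sum_const, Finset.card_range, nsmul_eq_mul]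
      _ = L * G * η ^ 2 * ((H:ℝ) * ((H:ℝ) - 1)) + α * (H:ℝ) * η := by
          rw [hgauss]; ring
      _ ≤ L * G * (H : ℝ) ^ 2 * η ^ 2 + α * (H : ℝ) * η := by
          have hH1 : (1:ℝ) ≤ (H:ℝ) := by exact_mod_cast hH
          nlinarith [mul_nonneg (mul_nonneg hL hG) (sq_nonneg η)]
  calc ‖(η / (Mnum : ℝ)) • ∑ n ∈ M, Gtilde n - (η / (N : ℝ)) • ∑ n, Gn n‖
      ≤ ‖(η / (Mnum:ℝ)) • ∑ n ∈ M, (Gtilde n - Gn n)‖ + ‖∑ j ∈ Finset.range H, T j‖ := by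
        rw [hkey]; exact norm_add_le _ _
    _ ≤ (η / (Mnum : ℝ)) * ∑ n ∈ M, β n
        + (L * G * (H : ℝ) ^ 2 * η ^ 2 + α * (H : ℝ) * η) := add_le_add hβsum hTsum
    _ = L * G * (H : ℝ) ^ 2 * η ^ 2 + α * (H : ℝ) * η
        + (η / (Mnum : ℝ)) * ∑ n ∈ M, β n := by ring
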